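/- For every X ∈ E with X⁺ ≠ 0 and X⁻ ≠ 0, one has X ∈ L if and only if p_B(X) = b(X) and p_A(X) = a(X). -/

import Mathlib

open scoped BigOperators

namespace OB

/-- The space of order configurations `E = ℕ^d × ℕ^d`: buy side and sell side. -/
abbrev E (d : ℕ) := (Fin d → ℕ) × (Fin d → ℕ)

/-- Price support of a vector: the set of prices `j ∈ {1,…,d}` with a positive queue. -/
def supp {d : ℕ} (Z : Fin d → ℕ) : Finset ℕ :=
  (Finset.univ.filter fun j : Fin d => 0 < Z j).image fun j : Fin d => (j : ℕ) + 1

/-- `sup supp`, with the convention `sup ∅ = 0`. -/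
def supSupp {d : ℕ} (Z : Fin d → ℕ) : ℕ := (supp Z).sup id

/-- `inf supp`, with the convention `inf ∅ = d+1`. -/
def infSupp {d : ℕ} (Z : Fin d → ℕ) : ℕ :=
  if h : (supp Z).Nonempty then (supp Z).min' h else d + 1

/-- bid price `b(X) = sup supp(X⁺)`. -/
def bid {d : ℕ} (X : E d) : ℕ := supSupp X.1

/-- ask price `a(X) = inf supp(X⁻)`. -/
def ask {d : ℕ} (X : E d) : ℕ := infSupp X.2

/-- Admissible limit order book configurations: `a(X) > b(X)`. -/
def Lset (d : ℕ) : Set (E d) := {X | bid X < ask X}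

/-- Entry of a vector at price `i` (prices run from 1 to d; 0 outside this range). -/
def ent {d : ℕ} (z : Fin d → ℕ) (i : ℕ) : ℕ :=
  if h : 1 ≤ i ∧ i ≤ d then z ⟨i - 1, by omega⟩ else 0

/-- Standard basis vector at price `i`. -/
def e {d : ℕ} (i : ℕ) : Fin d → ℕ := fun j => if (j : ℕ) + 1 = i then 1 else 0

/-- `τ_i`: zero out all entries at prices `> i`. -/
def tauLow {d : ℕ} (i : ℤ) (z : Fin d → ℕ) : Fin d → ℕ :=
  fun j => if ((j : ℕ) + 1 : ℤ) ≤ i then z j else 0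

/-- `τ^i`: zero out all entries at prices `< i`. -/
def tauHigh {d : ℕ} (i : ℤ) (z : Fin d → ℕ) : Fin d → ℕ :=
  fun j => if i ≤ ((j : ℕ) + 1 : ℤ) then z j else 0

/-- `B_X(k) = Σ_{i ≥ k} X⁺_i`. -/
def BX {d : ℕ} (X : E d) (k : ℕ) : ℕ := ∑ j : Fin d, if k ≤ (j : ℕ) + 1 then X.1 j else 0

/-- `S_X(k) = Σ_{i ≤ k} X⁻_i`. -/
def SX {d : ℕ} (X : E d) (k : ℕ) : ℕ := ∑ j : Fin d, if (j : ℕ) + 1 ≤ k then X.2 j else 0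

/-- `g_X(k) = S_X(k) − B_X(k)`. -/
def gX {d : ℕ} (X : E d) (k : ℕ) : ℤ := (SX X k : ℤ) - (BX X k : ℤ)

/-- `p_A(X) = inf{k ∈ {1,…,d} : g_X(k) > 0}`, convention `inf ∅ = d+1`. -/
def pA {d : ℕ} (X : E d) : ℕ :=
  if h : ((Finset.Icc 1 d).filter fun k => 0 < gX X k).Nonempty
  then ((Finset.Icc 1 d).filter fun k => 0 < gX X k).min' h else d + 1

/-- `p_B(X) = sup{k ∈ {1,…,d} : g_X(k) < 0}`, convention `sup ∅ = 0`. -/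
def pB {d : ℕ} (X : E d) : ℕ :=
  ((Finset.Icc 1 d).filter fun k => gX X k < 0).sup id

/-- `B_X⁻¹(z) = sup{i ∈ {1,…,d} : B_X(i) ≥ z}`, convention `sup ∅ = 0`. -/
def Binv {d : ℕ} (X : E d) (z : ℕ) : ℕ :=
  ((Finset.Icc 1 d).filter fun i => z ≤ BX X i).sup id

/-- `S_X⁻¹(z) = inf{i ∈ {1,…,d} : S_X(i) ≥ z}`, convention `inf ∅ = d+1`. -/
def Sinv {d : ℕ} (X : E d) (z : ℕ) : ℕ :=
  if h : ((Finset.Icc 1 d).filter fun i => z ≤ SX X i).Nonempty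
  then ((Finset.Icc 1 d).filter fun i => z ≤ SX X i).min' h else d + 1

/-- Buy side after order-matching clearing (Eq. (11) of the paper):
`C(X)⁺ = τ_{p_B}(X⁺)` if `g_X(p_B) ≤ −X⁺_{p_B}`, and
`C(X)⁺ = τ_{p_B−1}(X⁺) − min{0, g_X(p_B)}·e_{p_B}` otherwise. -/
def clearPlus {d : ℕ} (X : E d) : Fin d → ℕ :=
  if gX X (pB X) ≤ -(ent X.1 (pB X) : ℤ) then tauLow (pB X : ℤ) X.1
  else fun j => tauLow ((pB X : ℤ) - 1) X.1 j + (max 0 (-(gX X (pB X)))).toNat * e (pB X) j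

/-- Sell side after order-matching clearing (Eq. (12) of the paper):
`C(X)⁻ = τ^{p_A}(X⁻)` if `g_X(p_A) ≥ X⁻_{p_A}`, and
`C(X)⁻ = τ^{p_A+1}(X⁻) + max{0, g_X(p_A)}·e_{p_A}` otherwise. -/
def clearMinus {d : ℕ} (X : E d) : Fin d → ℕ :=
  if (ent X.2 (pA X) : ℤ) ≤ gX X (pA X) then tauHigh (pA X : ℤ) X.2
  else fun j => tauHigh ((pA X : ℤ) + 1) X.2 j + (max 0 (gX X (pA X))).toNat * e (pA X) j

/-- The order-matching clearing operator. -/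
def clear {d : ℕ} (X : E d) : E d := (clearPlus X, clearMinus X)

/-- Price support of an integer-valued vector. -/
def suppZ {d : ℕ} (W : Fin d → ℤ) : Finset ℕ :=
  (Finset.univ.filter fun j : Fin d => 0 < W j).image fun j : Fin d => (j : ℕ) + 1

/-- `sup supp` of an integer-valued vector, convention `sup ∅ = 0`. -/
def supSuppZ {d : ℕ} (W : Fin d → ℤ) : ℕ := (suppZ W).sup id

/-- `inf supp` of an integer-valued vector, convention `inf ∅ = d+1`. -/
def infSuppZ {d : ℕ} (W : Fin d → ℤ) : ℕ :=
  if h : (suppZ W).Nonempty then (suppZ W).min' h else d + 1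

/-- `D : E → E` is an order-matching clearing operator: it maps into `L`, its fixed
points are exactly `L`, and, with `Z(X) = X − D(X)` (computed in `ℤ^d × ℤ^d`), the
conditions (A1)–(A4) of Definition 2.2 hold. -/
def IsOrderMatchingClearing {d : ℕ} (D : E d → E d) : Prop :=
  (∀ X : E d, D X ∈ Lset d) ∧
  (∀ X : E d, X ∈ Lset d ↔ D X = X) ∧
  (∀ X : E d,
    -- (A1): the executed orders `Z(X) = X − D(X)` have nonnegative entries
    (∀ j, (D X).1 j ≤ X.1 j ∧ (D X).2 j ≤ X.2 j) ∧
    -- (A2): `|Z(X)⁺| = |Z(X)⁻|`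
    (∑ j, ((X.1 j : ℤ) - ((D X).1 j : ℤ))) = (∑ j, ((X.2 j : ℤ) - ((D X).2 j : ℤ))) ∧
    -- (A3): `sup supp(Z(X)⁻) ≤ inf supp(Z(X)⁺)`
    supSuppZ (fun j => (X.2 j : ℤ) - ((D X).2 j : ℤ)) ≤
      infSuppZ (fun j => (X.1 j : ℤ) - ((D X).1 j : ℤ)) ∧
    -- (A4): `sup supp(Z(X)⁻) ≤ inf supp(D(X)⁻)` and `inf supp(Z(X)⁺) ≥ sup supp(D(X)⁺)`
    supSuppZ (fun j => (X.2 j : ℤ) - ((D X).2 j : ℤ)) ≤ infSupp (D X).2 ∧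
    supSupp (D X).1 ≤ infSuppZ (fun j => (X.1 j : ℤ) - ((D X).1 j : ℤ)))


lemma mem_supp_iff {d : ℕ} {Z : Fin d → ℕ} {n : ℕ} :
    n ∈ supp Z ↔ ∃ j : Fin d, 0 < Z j ∧ (j : ℕ) + 1 = n := by
  simp [supp]

lemma supp_nonempty {d : ℕ} {Z : Fin d → ℕ} (h : Z ≠ 0) : (supp Z).Nonempty := by
  obtain ⟨j, hj⟩ : ∃ j, Z j ≠ 0 := by
    by_contra hc; push_neg at hc; exact h (funext hc)
  exact ⟨(j : ℕ) + 1, mem_supp_iff.2 ⟨j, Nat.pos_of_ne_zero hj, rfl⟩⟩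

lemma SX_mono {d : ℕ} (X : E d) {k m : ℕ} (h : k ≤ m) : SX X k ≤ SX X m := by
  apply Finset.sum_le_sum
  intro j _
  by_cases hj : (j : ℕ) + 1 ≤ k
  · simp [hj, hj.trans h]
  · simp [hj]

lemma BX_anti {d : ℕ} (X : E d) {k m : ℕ} (h : k ≤ m) : BX X m ≤ BX X k := by
  apply Finset.sum_le_sum
  intro j _
  by_cases hj : m ≤ (j : ℕ) + 1
  · simp [hj, h.trans hj]
  · simp [hj]

lemma gX_mono {d : ℕ} (X : E d) {k m : ℕ} (h : k ≤ m) : gX X k ≤ gX X m := by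
  have h1 := SX_mono X h
  have h2 := BX_anti X h
  unfold gX; omega

lemma pB_lt_pA {d : ℕ} (X : E d) : pB X < pA X := by
  unfold pA pB
  set T := (Finset.Icc 1 d).filter fun k => gX X k < 0 with hT
  set U := (Finset.Icc 1 d).filter fun k => 0 < gX X k with hU
  by_cases hUne : U.Nonempty
  · rw [dif_pos hUne]
    have hga : 0 < gX X (U.min' hUne) := (Finset.mem_filter.1 (U.min'_mem hUne)).2
    by_cases hTne : T.Nonempty
    · obtain ⟨b, hb, hbe⟩ := Finset.exists_mem_eq_sup T hTne id
      simp only [id_eq] at hbe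
      rw [hbe]
      have hgb : gX X b < 0 := (Finset.mem_filter.1 hb).2
      by_contra hc; push_neg at hc
      have := gX_mono X hc
      omega
    · rw [Finset.not_nonempty_iff_eq_empty.1 hTne]
      have h1 := (Finset.mem_Icc.1 (Finset.mem_filter.1 (U.min'_mem hUne)).1).1
      exact lt_of_lt_of_le (by simp) h1
  · rw [dif_neg hUne]
    have : T.sup id ≤ d :=
      Finset.sup_le fun k hk => (Finset.mem_Icc.1 (Finset.mem_filter.1 hk).1).2
    omega

/-- Eq. (10) of Cont–Degond–Xuan: for configurations with nonempty
buy and sell sides, `X ∈ L` iff `p_B(X) = b(X)` and `p_A(X) = a(X)`. -/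
theorem mem_Lset_iff_pB_pA (d : ℕ) (hd : 1 ≤ d) (X : E d)
    (hplus : X.1 ≠ 0) (hminus : X.2 ≠ 0) :
    X ∈ Lset d ↔ (pB X = bid X ∧ pA X = ask X) := by
  constructor
  · intro hL
    have hba : bid X < ask X := hL
    -- facts about bid
    have hsupp1 : (supp X.1).Nonempty := supp_nonempty hplus
    obtain ⟨b0, hb0mem, hb0eq⟩ := Finset.exists_mem_eq_sup (supp X.1) hsupp1 id
    have hbmem : bid X ∈ supp X.1 := by
      rw [bid, supSupp, hb0eq]; exact hb0mem
    obtain ⟨jb, hjbpos, hjbeq⟩ := mem_supp_iff.1 hbmem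
    have hb1 : 1 ≤ bid X := by omega
    have hb2 : bid X ≤ d := by have := jb.2; omega
    have hbub : ∀ j : Fin d, bid X < (j : ℕ) + 1 → X.1 j = 0 := by
      intro j hj
      by_contra hz
      have : (j : ℕ) + 1 ∈ supp X.1 := mem_supp_iff.2 ⟨j, Nat.pos_of_ne_zero hz, rfl⟩
      have := Finset.le_sup (f := id) this
      rw [bid, supSupp] at hj
      simp only [id] at this
      omega
    -- facts about ask
    have hsupp2 : (supp X.2).Nonempty := supp_nonempty hminus
    have haeq : ask X = (supp X.2).min' hsupp2 := by
      rw [ask, infSupp, dif_pos hsupp2]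
    have hamem : ask X ∈ supp X.2 := by rw [haeq]; exact (supp X.2).min'_mem hsupp2
    obtain ⟨ja, hjapos, hjaeq⟩ := mem_supp_iff.1 hamem
    have ha1 : 1 ≤ ask X := by omega
    have ha2 : ask X ≤ d := by have := ja.2; omega
    have halb : ∀ j : Fin d, (j : ℕ) + 1 < ask X → X.2 j = 0 := by
      intro j hj
      by_contra hz
      have hm : (j : ℕ) + 1 ∈ supp X.2 := mem_supp_iff.2 ⟨j, Nat.pos_of_ne_zero hz, rfl⟩
      have := (supp X.2).min'_le _ hm
      omega
    -- key sum facts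
    have hBb : 0 < BX X (bid X) := by
      have h1 : (if bid X ≤ (jb : ℕ) + 1 then X.1 jb else 0) ≤ BX X (bid X) :=
        Finset.single_le_sum (f := fun i : Fin d => if bid X ≤ (i : ℕ) + 1 then X.1 i else 0)
          (fun i _ => Nat.zero_le _) (Finset.mem_univ jb)
      rw [if_pos (by omega)] at h1
      omega
    have hBz : ∀ k, bid X < k → BX X k = 0 := by
      intro k hk
      apply Finset.sum_eq_zero
      intro j _
      by_cases hj : k ≤ (j : ℕ) + 1
      · rw [if_pos hj]; exact hbub j (by omega)
      · rw [if_neg hj]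
    have hSz : ∀ k, k < ask X → SX X k = 0 := by
      intro k hk
      apply Finset.sum_eq_zero
      intro j _
      by_cases hj : (j : ℕ) + 1 ≤ k
      · rw [if_pos hj]; exact halb j (by omega)
      · rw [if_neg hj]
    have hSa : 0 < SX X (ask X) := by
      have h1 : (if (ja : ℕ) + 1 ≤ ask X then X.2 ja else 0) ≤ SX X (ask X) :=
        Finset.single_le_sum (f := fun i : Fin d => if (i : ℕ) + 1 ≤ ask X then X.2 i else 0)
          (fun i _ => Nat.zero_le _) (Finset.mem_univ ja)
      rw [if_pos (by omega)] at h1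
      omega
    -- g at bid is negative, g at ask is positive
    have hgb : gX X (bid X) < 0 := by
      have h1 := hSz (bid X) hba
      unfold gX; omega
    have hga : 0 < gX X (ask X) := by
      have h1 := hBz (ask X) hba
      unfold gX; omega
    constructor
    · unfold pB
      apply le_antisymm
      · apply Finset.sup_le
        intro k hk
        obtain ⟨hk1, hk2⟩ := Finset.mem_filter.1 hk
        by_contra hc
        push_neg at hc
        have h1 := hBz k hc
        have : (0 : ℤ) ≤ gX X k := by unfold gX; omega
        omega
      · exact Finset.le_sup (f := id)
          (Finset.mem_filter.2 ⟨Finset.mem_Icc.2 ⟨hb1, hb2⟩, hgb⟩)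
    · have hmem : ask X ∈ (Finset.Icc 1 d).filter fun k => 0 < gX X k :=
        Finset.mem_filter.2 ⟨Finset.mem_Icc.2 ⟨ha1, ha2⟩, hga⟩
      have hne : ((Finset.Icc 1 d).filter fun k => 0 < gX X k).Nonempty := ⟨_, hmem⟩
      unfold pA
      rw [dif_pos hne]
      apply le_antisymm
      · exact Finset.min'_le _ _ hmem
      · apply Finset.le_min'
        intro k hk
        obtain ⟨hk1, hk2⟩ := Finset.mem_filter.1 hk
        by_contra hc
        push_neg at hc
        have h1 := hSz k hc
        have : gX X k ≤ 0 := by unfold gX; omega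
        omega
  · rintro ⟨h1, h2⟩
    have := pB_lt_pA X
    rw [h1, h2] at this
    exact this

end OB
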